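/- In an extreme even individual purpose game with c_1 = 0, c_K = g, any profile D in which every agent contributes 0 to goals other than its own and some agent i contributes d_{ii} < g to its own goal is not a Nash equilibrium (agent i improves by deviating to contribute g to goal i). -/

import Mathlib

open Finset

/-- Heaviside step: `Θ x = 1` if `x ≥ 0`, else `0`. -/
noncomputable def theta (x : ℝ) : ℝ := if 0 ≤ x then 1 else 0

/-- Utility of agent `i` in a multi-goal achievement game with motivation
matrix `w`, goal thresholds `g` and contribution matrix `D`:
`u_i(D) = -Σ_j d_{ij} + Σ_j w_{ij}·Θ(Σ_k d_{kj} - g_j)`. -/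
noncomputable def util {N M : ℕ} (w : Fin N → Fin M → ℝ) (g : Fin M → ℝ)
    (D : Fin N → Fin M → ℝ) (i : Fin N) : ℝ :=
  -(∑ j, D i j) + ∑ j, w i j * theta ((∑ k, D k j) - g j)

/-- `D` is a pure-strategy Nash equilibrium of the `N`-agent, `N`-goal
achievement game with cost set `C`, motivation matrix `w` and common goal
threshold `g`: all contributions lie in `C`, and no agent can strictly
increase its utility by unilaterally changing its own row to another row with
entries in `C`. -/
noncomputable def IsNash {N : ℕ} (C : Set ℝ) (w : Fin N → Fin N → ℝ) (g : ℝ)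
    (D : Fin N → Fin N → ℝ) : Prop :=
  (∀ k l, D k l ∈ C) ∧
  ∀ i : Fin N, ∀ r : Fin N → ℝ, (∀ j, r j ∈ C) →
    util w (fun _ => g) (Function.update D i r) i ≤ util w (fun _ => g) D i

/-- In an extreme even individual purpose game, any profile in which every
agent contributes `0` to goals other than its own and some agent `i`
contributes less than `g` to its own goal is not a Nash equilibrium: agent `i`
strictly improves by deviating to contribute `g` to goal `i`. -/
theorem underinvestment_not_nash {N : ℕ} (C : Set ℝ) (g : ℝ)
    (hg : 0 < g) (h0C : (0:ℝ) ∈ C) (hgC : g ∈ C)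
    (hCpos : ∀ x ∈ C, 0 ≤ x)
    (w : Fin N → Fin N → ℝ)
    (hwii : ∀ i, g < w i i)
    (hwij : ∀ i j, 0 ≤ w i j)
    (D : Fin N → Fin N → ℝ) (hDC : ∀ k l, D k l ∈ C)
    (hD0 : ∀ k j, k ≠ j → D k j = 0)
    (i : Fin N) (hii : D i i < g) :
    util w (fun _ => g) D i <
      util w (fun _ => g)
        (Function.update D i (fun j => if j = i then g else 0)) i ∧
    ¬ IsNash C w g D := by
  set r : Fin N → ℝ := fun j => if j = i then g else 0 with hr
  have hrC : ∀ j, r j ∈ C := by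
    intro j; simp only [hr]; split <;> assumption
  -- row sums
  have hrow : ∑ j, D i j = D i i :=
    Finset.sum_eq_single i (fun b _ hb => hD0 i b (Ne.symm hb)) (by simp)
  have hrow' : ∑ j, r j = g := by
    rw [hr]
    rw [Finset.sum_eq_single i (fun b _ hb => if_neg hb) (by simp)]
    simp
  -- column sums
  have hcol : ∀ j, ∑ k, D k j = D j j :=
    fun j => Finset.sum_eq_single j (fun b _ hb => hD0 b j hb) (by simp)
  have hcol' : ∀ j, ∑ k, Function.update D i r k j =
      if j = i then g else D j j := by
    intro j
    by_cases hj : j = i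
    · subst hj
      rw [if_pos rfl]
      rw [Finset.sum_eq_single j (fun b _ hb => by
        rw [Function.update_of_ne hb]; exact hD0 b j hb) (by simp)]
      simp [hr]
    · rw [if_neg hj]
      rw [Finset.sum_eq_single j (fun b _ hb => by
        by_cases hbi : b = i
        · subst hbi
          simp [hr, hj]
        · rw [Function.update_of_ne hbi]; exact hD0 b j hb) (by simp)]
      rw [Function.update_of_ne hj]
  have hDii : 0 ≤ D i i := hCpos _ (hDC i i)
  have key : util w (fun _ => g) D i <
      util w (fun _ => g) (Function.update D i r) i := by
    unfold util
    rw [Function.update_self, hrow, hrow']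
    have hs : ∀ j, ∑ k, Function.update D i r k j = if j = i then g else D j j :=
      hcol'
    simp only [hs, hcol]
    rw [Fintype.sum_eq_add_sum_compl i (fun j => w i j * theta (D j j - g)),
        Fintype.sum_eq_add_sum_compl i
          (fun j => w i j * theta ((if j = i then g else D j j) - g))]
    have heq : ∑ j ∈ {i}ᶜ, w i j * theta ((if j = i then g else D j j) - g)
        = ∑ j ∈ {i}ᶜ, w i j * theta (D j j - g) := by
      apply Finset.sum_congr rfl
      intro j hj
      rw [if_neg (by simpa using hj)]
    rw [heq, if_pos rfl]
    have h1 : theta (D i i - g) = 0 := by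
      unfold theta; rw [if_neg (by linarith)]
    have h2 : theta (g - g) = 1 := by
      unfold theta; rw [if_pos (by linarith)]
    rw [h1, h2]
    have := hwii i
    ring_nf
    nlinarith [show ∑ x ∈ {i}ᶜ, w i x * theta (-g + D x x) = ∑ x ∈ {i}ᶜ, w i x * theta (D x x - g) from by simp only [neg_add_eq_sub]]
  refine ⟨key, ?_⟩
  rintro ⟨_, hN⟩
  exact absurd (hN i r hrC) (not_le.2 key)
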